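/- Let c₂ be a real number with c₂ ∉ {0, 1, 1/2, -1}. Define u₂(α) = (α+1)²(1 - 2α + 3α²/(2c₂-1)), ã₂₁(α) = α²(α+1) - α²(α+1)²(3c₂-1)/(2c₂(2c₂-1)), ã₂₂(α) = α²(α+1)²/(2c₂(c₂-1)(2c₂-1)), a₂₁(α) = α(α+1)²(1 - α(3c₂-2)/(2(2c₂-1)(c₂-1))). Then for all real α: -(1-u₂) + ã₂₁ + ã₂₂ + a₂₁ = α, (1-u₂)/2 - ã₂₁ - (1-c₂)ã₂₂ = α²/2, -(1-u₂)/3 + ã₂₁ + (1-c₂)²ã₂₂ = α³/3, and (1-u₂)/4 - ã₂₁ - (1-c₂)³ã₂₂ = α⁴/4. -/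
import Mathlib


/-- Uniform stage order-four conditions Γ₂ₖ = 0, k = 1,...,4, for the second
stage of the 2-stage explicit TSGLM with c₁ = 0 and general c₂, with the
order-five family coefficients u₂, ã₂₁, ã₂₂, a₂₁. -/
theorem stmt5 (c₂ : ℝ) (h0 : c₂ ≠ 0) (h1 : c₂ ≠ 1) (hhalf : c₂ ≠ 1/2)
    (hm1 : c₂ ≠ -1) (α : ℝ) :
    (let u₂ := (α+1)^2 * (1 - 2*α + 3*α^2/(2*c₂-1));
    let ta21 := α^2*(α+1) - α^2*(α+1)^2*(3*c₂-1)/(2*c₂*(2*c₂-1));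
    let ta22 := α^2*(α+1)^2 / (2*c₂*(c₂-1)*(2*c₂-1));
    let a21 := α*(α+1)^2 * (1 - α*(3*c₂-2)/(2*(2*c₂-1)*(c₂-1)));
    -(1 - u₂) + ta21 + ta22 + a21 = α ∧
    (1 - u₂)/2 - ta21 - (1-c₂)*ta22 = α^2/2 ∧
    -(1 - u₂)/3 + ta21 + (1-c₂)^2*ta22 = α^3/3 ∧
    (1 - u₂)/4 - ta21 - (1-c₂)^3*ta22 = α^4/4) := by
  have h2 : 2*c₂-1 ≠ 0 := by intro h; apply hhalf; linarith
  have hc1 : c₂ - 1 ≠ 0 := sub_ne_zero.mpr h1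
  refine ⟨?_, ?_, ?_, ?_⟩ <;> field_simp <;> ring
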